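/- A band B of A is resonant if and only if q_∞ · ∏_{H_i ∈ P} q_i = 1, where P ⊆ A is the set of lines of A parallel to the boundary lines of B (including the boundary lines themselves); equivalently, if and only if ∏_{H_i ∈ Sep(U_1(B),U_2(B))} q_i = 1. In particular, whether a band is resonant depends only on the common direction of its boundary lines. -/

import Mathlib

open scoped Classical

noncomputable section

abbrev Pt : Type := ℝ × ℝ

/-- An affine-linear functional `a*x + b*y + c` on `ℝ²` with nonzero linear part. -/
structure AffForm : Type where
  a : ℝ
  b : ℝ
  c : ℝ
  nondeg : a ≠ 0 ∨ b ≠ 0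

namespace AffForm

def eval (f : AffForm) (p : Pt) : ℝ := f.a * p.1 + f.b * p.2 + f.c

def line (f : AffForm) : Set Pt := {p | f.eval p = 0}

def Parallel (f g : AffForm) : Prop := f.a * g.b = f.b * g.a

end AffForm

variable {n : ℕ}

/-- An arrangement: at least two distinct affine lines, not all parallel. -/
def IsArrangement (α : Fin n → AffForm) : Prop :=
  2 ≤ n ∧ (∀ i j : Fin n, i ≠ j → (α i).line ≠ (α j).line) ∧
    ∃ i j : Fin n, ¬ (α i).Parallel (α j)

def complement (α : Fin n → AffForm) : Set Pt := {p | ∀ i, (α i).eval p ≠ 0}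

/-- A chamber: a connected component of the complement of the union of the lines. -/
def IsChamber (α : Fin n → AffForm) (C : Set Pt) : Prop :=
  ∃ p ∈ complement α, C = connectedComponentIn (complement α) p

/-- `Sep(C, C')`: the set of indices `i` such that `α i` is positive on one of `C, C'`
and negative on the other. -/
def SepSet (α : Fin n → AffForm) (C C' : Set Pt) : Finset (Fin n) :=
  Finset.univ.filter fun i =>
    ((∀ p ∈ C, 0 < (α i).eval p) ∧ (∀ p ∈ C', (α i).eval p < 0)) ∨
    ((∀ p ∈ C, (α i).eval p < 0) ∧ (∀ p ∈ C', 0 < (α i).eval p))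

/-- `Δ(C, C') = ∏_{i ∈ Sep(C,C')} r i − ∏_{i ∈ Sep(C,C')} (r i)⁻¹`. -/
def Delta (α : Fin n → AffForm) (r : Fin n → ℂ) (C C' : Set Pt) : ℂ :=
  (∏ i ∈ SepSet α C C', r i) - ∏ i ∈ SepSet α C C', (r i)⁻¹

/-- The open strip between two parallel lines `f.line` and `g.line`. -/
def Strip (f g : AffForm) : Set Pt :=
  {p | ∀ q ∈ g.line,
    (0 < f.eval p ∧ f.eval p < f.eval q) ∨ (f.eval q < f.eval p ∧ f.eval p < 0)}

/-- A band: the open strip between two parallel lines of the arrangement containing no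
other line of the arrangement parallel to them. -/
def IsBand (α : Fin n → AffForm) (B : Set Pt) : Prop :=
  ∃ i j : Fin n, i ≠ j ∧ (α i).Parallel (α j) ∧ B = Strip (α i) (α j) ∧
    ∀ k : Fin n, (α k).Parallel (α i) → (α k).line ∩ B = ∅

/-- The data of a band `B` bounded by the parallel lines `H i` and `H j`, together with its
two unbounded chambers `U1` (= `U_1(B)`) and `U2` (= `U_2(B)`). -/
def BandData (α : Fin n → AffForm) (i j : Fin n) (B U1 U2 : Set Pt) : Prop :=
  i ≠ j ∧ (α i).Parallel (α j) ∧ B = Strip (α i) (α j) ∧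
  (∀ k : Fin n, (α k).Parallel (α i) → (α k).line ∩ B = ∅) ∧
  IsChamber α U1 ∧ IsChamber α U2 ∧ U1 ⊆ B ∧ U2 ⊆ B ∧
  ¬ Bornology.IsBounded U1 ∧ ¬ Bornology.IsBounded U2 ∧ U1 ≠ U2

section Helpers

private lemma affContinuousEval (f : AffForm) : Continuous f.eval := by
  unfold AffForm.eval
  fun_prop

private lemma signConst {s : Set Pt} (hs : IsPreconnected s) (f : AffForm)
    (h : ∀ p ∈ s, f.eval p ≠ 0) :
    (∀ p ∈ s, 0 < f.eval p) ∨ (∀ p ∈ s, f.eval p < 0) := by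
  by_contra hc
  push_neg at hc
  obtain ⟨⟨p1, hp1, hf1⟩, ⟨p2, hp2, hf2⟩⟩ := hc
  have h1 : f.eval p1 < 0 := lt_of_le_of_ne hf1 (h p1 hp1)
  have h2 : 0 < f.eval p2 := lt_of_le_of_ne hf2 (Ne.symm (h p2 hp2))
  obtain ⟨p0, hp0, hfp0⟩ := hs.intermediate_value hp1 hp2 (affContinuousEval f).continuousOn
    (Set.mem_Icc.mpr ⟨h1.le, h2.le⟩)
  exact h p0 hp0 hfp0

private lemma parallelSymm {f g : AffForm} (h : f.Parallel g) : g.Parallel f := by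
  unfold AffForm.Parallel at *
  linear_combination -h

private lemma parallelTrans {f g h : AffForm} (hfg : f.Parallel g) (hgh : g.Parallel h) :
    f.Parallel h := by
  unfold AffForm.Parallel at *
  rcases g.nondeg with h0 | h0
  · have key : g.a * (f.a * h.b) = g.a * (f.b * h.a) := by
      linear_combination f.a * hgh + h.a * hfg
    exact mul_left_cancel₀ h0 key
  · have key : g.b * (f.a * h.b) = g.b * (f.b * h.a) := by
      linear_combination f.b * hgh + h.b * hfg
    exact mul_left_cancel₀ h0 key

set_option maxHeartbeats 1600000 in
private lemma sepSetEq {n : ℕ} (α : Fin n → AffForm) (hA : IsArrangement α) (i j : Fin n)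
    (B U1 U2 : Set Pt) (hB : BandData α i j B U1 U2) :
    SepSet α U1 U2 = Finset.univ.filter (fun k : Fin n => ¬ (α k).Parallel (α i)) := by
  obtain ⟨hij, hpar, hBS, hnol, hC1, hC2, hU1B, hU2B, hUb1, hUb2, hU12⟩ := hB
  obtain ⟨p₁, hp₁, hU1eq⟩ := hC1
  obtain ⟨p₂, hp₂, hU2eq⟩ := hC2
  have hU1ne : p₁ ∈ U1 := by rw [hU1eq]; exact mem_connectedComponentIn hp₁
  have hU2ne : p₂ ∈ U2 := by rw [hU2eq]; exact mem_connectedComponentIn hp₂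
  have hU1pre : IsPreconnected U1 := by rw [hU1eq]; exact isPreconnected_connectedComponentIn
  have hU2pre : IsPreconnected U2 := by rw [hU2eq]; exact isPreconnected_connectedComponentIn
  have hU1c : U1 ⊆ complement α := by rw [hU1eq]; exact connectedComponentIn_subset _ _
  have hU2c : U2 ⊆ complement α := by rw [hU2eq]; exact connectedComponentIn_subset _ _
  set f : AffForm := α i with hfdef
  set g : AffForm := α j with hgdef
  clear_value f g
  have hD : (0:ℝ) < f.a ^ 2 + f.b ^ 2 := by
    rcases f.nondeg with h0 | h0 <;>
      nlinarith [sq_nonneg f.a, sq_nonneg f.b, mul_self_pos.mpr h0]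
  set D : ℝ := f.a ^ 2 + f.b ^ 2 with hDdef
  clear_value D
  obtain ⟨μ, hga, hgb⟩ : ∃ μ : ℝ, g.a = μ * f.a ∧ g.b = μ * f.b := by
    have hp : f.a * g.b = f.b * g.a := hpar
    rcases f.nondeg with h0 | h0
    · refine ⟨g.a / f.a, by field_simp, ?_⟩
      field_simp
      linear_combination hp
    · refine ⟨g.b / f.b, ?_, by field_simp⟩
      field_simp
      linear_combination -hp
  have hμ0 : μ ≠ 0 := by
    intro h0
    rcases g.nondeg with h1 | h1
    · rw [hga, h0, zero_mul] at h1; exact h1 rfl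
    · rw [hgb, h0, zero_mul] at h1; exact h1 rfl
  set s : ℝ := -(g.c - μ * f.c) / μ with hsdef
  clear_value s
  have hgeval : ∀ p : Pt, g.eval p = μ * (f.eval p - s) := by
    intro p
    simp only [AffForm.eval]
    rw [hga, hgb, hsdef]
    field_simp
    ring
  have hgline : ∀ p : Pt, (g.eval p = 0 ↔ f.eval p = s) := by
    intro p
    rw [hgeval p]
    constructor
    · intro h0
      rcases mul_eq_zero.mp h0 with h | h
      · exact absurd h hμ0
      · linarith
    · intro h0; rw [h0]; ring
  have hs0 : s ≠ 0 := by
    intro h0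
    apply hA.2.1 i j hij
    ext p
    simp only [AffForm.line, Set.mem_setOf_eq, ← hfdef, ← hgdef]
    rw [hgline p, h0]
  set tm : Pt → ℝ := fun p => -f.b * p.1 + f.a * p.2 with htm
  clear_value tm
  have hsurj : ∀ x u : ℝ, ∃ p : Pt, f.eval p = x ∧ tm p = u := by
    intro x u
    have hDne : f.a ^ 2 + f.b ^ 2 ≠ 0 := by rw [← hDdef]; exact hD.ne'
    refine ⟨((f.a * (x - f.c) - f.b * u) / D, (f.b * (x - f.c) + f.a * u) / D), ?_, ?_⟩
    · show f.a * ((f.a * (x - f.c) - f.b * u) / D) + f.b * ((f.b * (x - f.c) + f.a * u) / D)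
        + f.c = x
      rw [hDdef]
      field_simp [hDne]
      ring
    · rw [htm]
      show -f.b * ((f.a * (x - f.c) - f.b * u) / D) + f.a * ((f.b * (x - f.c) + f.a * u) / D) = u
      rw [hDdef]
      field_simp [hDne]
      ring
  have hBmem0 : ∀ p : Pt,
      p ∈ B ↔ ((0 < f.eval p ∧ f.eval p < s) ∨ (s < f.eval p ∧ f.eval p < 0)) := by
    intro p
    rw [hBS]
    simp only [Strip, AffForm.line, Set.mem_setOf_eq]
    constructor
    · intro hmem
      obtain ⟨qq, hq, -⟩ := hsurj s 0
      have := hmem qq ((hgline qq).mpr hq)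
      rwa [hq] at this
    · intro hc qq hq
      rw [(hgline qq).mp hq]
      exact hc
  obtain ⟨lo, hi, hlh, hmem⟩ :
      ∃ lo hi : ℝ, lo < hi ∧ ∀ p : Pt, p ∈ B ↔ (lo < f.eval p ∧ f.eval p < hi) := by
    rcases lt_or_gt_of_ne hs0 with h | h
    · refine ⟨s, 0, h, fun p => ?_⟩
      rw [hBmem0 p]
      constructor
      · rintro (⟨h1, h2⟩ | ⟨h1, h2⟩) <;> constructor <;> linarith
      · intro h1; right; exact h1
    · refine ⟨0, s, h, fun p => ?_⟩
      rw [hBmem0 p]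
      constructor
      · rintro (⟨h1, h2⟩ | ⟨h1, h2⟩) <;> constructor <;> linarith
      · intro h1; left; exact h1
  have haff : ∀ (a b : ℝ) (p q : Pt), a + b = 1 →
      f.eval (a • p + b • q) = a * f.eval p + b * f.eval q := by
    intro a b p q hab
    simp only [AffForm.eval, Prod.fst_add, Prod.snd_add, Prod.smul_fst, Prod.smul_snd,
      smul_eq_mul]
    linear_combination (-f.c) * hab
  have htaff : ∀ (a b : ℝ) (p q : Pt), tm (a • p + b • q) = a * tm p + b * tm q := by
    intro a b p q
    simp only [htm, Prod.fst_add, Prod.snd_add, Prod.smul_fst, Prod.smul_snd, smul_eq_mul]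
    ring
  have hBconv : Convex ℝ B := by
    intro p hp q hq a b ha hb hab
    rw [hmem] at hp hq ⊢
    rw [haff a b p q hab]
    have h1 := (convex_Ioo lo hi) (Set.mem_Ioo.mpr hp) (Set.mem_Ioo.mpr hq) ha hb hab
    simpa [smul_eq_mul, Set.mem_Ioo] using h1
  set w : Fin n → ℝ := fun k => f.a * (α k).b - f.b * (α k).a with hwdef
  clear_value w
  have hkey : ∀ (k : Fin n) (p : Pt),
      D * (α k).eval p =
        ((α k).a * f.a + (α k).b * f.b) * (f.eval p - f.c) + w k * tm p + D * (α k).c := by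
    intro k p
    simp only [AffForm.eval, hwdef, htm, hDdef]
    ring
  have hwpar : ∀ k : Fin n, ((α k).Parallel f ↔ w k = 0) := by
    intro k
    simp only [AffForm.Parallel, hwdef]
    constructor <;> intro h0 <;> linear_combination -h0
  set K1 : ℝ := |lo| + |hi| + |f.c| with hK1def
  clear_value K1
  have hK1n : 0 ≤ K1 := by
    rw [hK1def]
    positivity
  have hK1 : ∀ p ∈ B, |f.eval p - f.c| ≤ K1 := by
    intro p hp
    rw [hmem] at hp
    rw [hK1def, abs_le]
    have h1 := le_abs_self hi
    have h2 := neg_abs_le lo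
    have h3 := le_abs_self f.c
    have h4 := neg_abs_le f.c
    have h5 := abs_nonneg hi
    have h6 := abs_nonneg lo
    constructor <;> linarith [hp.1, hp.2]
  set M : Fin n → ℝ := fun k => |(α k).a * f.a + (α k).b * f.b| * K1 + D * |(α k).c| with hMdef
  clear_value M
  have hMb : ∀ (k : Fin n), ∀ p ∈ B,
      |((α k).a * f.a + (α k).b * f.b) * (f.eval p - f.c) + D * (α k).c| ≤ M k := by
    intro k p hp
    calc |((α k).a * f.a + (α k).b * f.b) * (f.eval p - f.c) + D * (α k).c|
        ≤ |((α k).a * f.a + (α k).b * f.b) * (f.eval p - f.c)| + |D * (α k).c| := abs_add_le _ _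
      _ ≤ M k := by
          simp only [hMdef]
          rw [abs_mul, abs_mul, abs_of_pos hD]
          have h0 := abs_nonneg ((α k).a * f.a + (α k).b * f.b)
          have h1 := mul_le_mul_of_nonneg_left (hK1 p hp) h0
          linarith
  have hwi : w i = 0 := by
    simp only [hwdef, ← hfdef]
    ring
  obtain ⟨T, hT0, hTk⟩ : ∃ T : ℝ, 0 ≤ T ∧ ∀ k : Fin n, w k ≠ 0 → (M k + 1) / |w k| ≤ T := by
    refine ⟨Finset.univ.sup' ⟨i, Finset.mem_univ i⟩
      (fun k => if w k = 0 then 0 else (M k + 1) / |w k|), ?_, ?_⟩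
    · have h0 := Finset.le_sup' (fun k => if w k = 0 then 0 else (M k + 1) / |w k|)
        (Finset.mem_univ i)
      rwa [if_pos hwi] at h0
    · intro k hk
      have h0 := Finset.le_sup' (fun k => if w k = 0 then 0 else (M k + 1) / |w k|)
        (Finset.mem_univ k)
      rwa [if_neg hk] at h0
  have hsignp : ∀ k : Fin n, w k ≠ 0 → ∀ p ∈ B, T < tm p →
      (0 < w k → 0 < (α k).eval p) ∧ (w k < 0 → (α k).eval p < 0) := by
    intro k hk p hp ht
    have hKey := hkey k p
    have hMb' := hMb k p hp
    have hTk' := hTk k hk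
    have h2 := neg_abs_le (((α k).a * f.a + (α k).b * f.b) * (f.eval p - f.c) + D * (α k).c)
    have h1 := le_abs_self (((α k).a * f.a + (α k).b * f.b) * (f.eval p - f.c) + D * (α k).c)
    constructor
    · intro hw
      rw [abs_of_pos hw, div_le_iff₀ hw] at hTk'
      have h3 : w k * T < w k * tm p := mul_lt_mul_of_pos_left ht hw
      nlinarith [hD]
    · intro hw
      rw [abs_of_neg hw, div_le_iff₀ (neg_pos.mpr hw)] at hTk'
      have h3 : w k * tm p < w k * T := mul_lt_mul_of_neg_left ht hw
      nlinarith [hD]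
  have hsignm : ∀ k : Fin n, w k ≠ 0 → ∀ p ∈ B, tm p < -T →
      (0 < w k → (α k).eval p < 0) ∧ (w k < 0 → 0 < (α k).eval p) := by
    intro k hk p hp ht
    have hKey := hkey k p
    have hMb' := hMb k p hp
    have hTk' := hTk k hk
    have h2 := neg_abs_le (((α k).a * f.a + (α k).b * f.b) * (f.eval p - f.c) + D * (α k).c)
    have h1 := le_abs_self (((α k).a * f.a + (α k).b * f.b) * (f.eval p - f.c) + D * (α k).c)
    constructor
    · intro hw
      rw [abs_of_pos hw, div_le_iff₀ hw] at hTk'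
      have h3 : w k * tm p < w k * (-T) := mul_lt_mul_of_pos_left ht hw
      nlinarith [hD]
    · intro hw
      rw [abs_of_neg hw, div_le_iff₀ (neg_pos.mpr hw)] at hTk'
      have h3 : w k * (-T) < w k * tm p := mul_lt_mul_of_neg_left ht hw
      nlinarith [hD]
  set Rp : Set Pt := {p : Pt | p ∈ B ∧ T < tm p} with hRpdef
  clear_value Rp
  set Rm : Set Pt := {p : Pt | p ∈ B ∧ tm p < -T} with hRmdef
  clear_value Rm
  have hRpc : Rp ⊆ complement α := by
    intro p hp
    simp only [hRpdef, Set.mem_setOf_eq] at hp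
    obtain ⟨hpB, hpt⟩ := hp
    simp only [complement, Set.mem_setOf_eq]
    intro k
    by_cases hk : w k = 0
    · have hpark : (α k).Parallel f := (hwpar k).mpr hk
      have hline := hnol k hpark
      intro h0
      have hmem2 : p ∈ (α k).line ∩ B := ⟨h0, hpB⟩
      rw [hline] at hmem2
      simpa using hmem2
    · rcases lt_or_gt_of_ne hk with hw | hw
      · exact ne_of_lt ((hsignp k hk p hpB hpt).2 hw)
      · exact ne_of_gt ((hsignp k hk p hpB hpt).1 hw)
  have hRmc : Rm ⊆ complement α := by
    intro p hp
    simp only [hRmdef, Set.mem_setOf_eq] at hp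
    obtain ⟨hpB, hpt⟩ := hp
    simp only [complement, Set.mem_setOf_eq]
    intro k
    by_cases hk : w k = 0
    · have hpark : (α k).Parallel f := (hwpar k).mpr hk
      have hline := hnol k hpark
      intro h0
      have hmem2 : p ∈ (α k).line ∩ B := ⟨h0, hpB⟩
      rw [hline] at hmem2
      simpa using hmem2
    · rcases lt_or_gt_of_ne hk with hw | hw
      · exact ne_of_gt ((hsignm k hk p hpB hpt).2 hw)
      · exact ne_of_lt ((hsignm k hk p hpB hpt).1 hw)
  have hRpconv : Convex ℝ Rp := by
    intro p hp q hq a b ha hb hab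
    simp only [hRpdef, Set.mem_setOf_eq] at hp hq ⊢
    refine ⟨hBconv hp.1 hq.1 ha hb hab, ?_⟩
    rw [htaff a b p q]
    have h1 := (convex_Ioi T) (Set.mem_Ioi.mpr hp.2) (Set.mem_Ioi.mpr hq.2) ha hb hab
    simpa [smul_eq_mul, Set.mem_Ioi] using h1
  have hRmconv : Convex ℝ Rm := by
    intro p hp q hq a b ha hb hab
    simp only [hRmdef, Set.mem_setOf_eq] at hp hq ⊢
    refine ⟨hBconv hp.1 hq.1 ha hb hab, ?_⟩
    rw [htaff a b p q]
    have h1 := (convex_Iio (-T)) (Set.mem_Iio.mpr hp.2) (Set.mem_Iio.mpr hq.2) ha hb hab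
    simpa [smul_eq_mul, Set.mem_Iio] using h1
  obtain ⟨pp, hppf, hppt⟩ := hsurj ((lo + hi) / 2) (T + 1)
  have hppB : pp ∈ B := (hmem pp).mpr ⟨by rw [hppf]; linarith, by rw [hppf]; linarith⟩
  have hpptT : T < tm pp := by rw [hppt]; linarith
  have hppRp : pp ∈ Rp := by
    simp only [hRpdef, Set.mem_setOf_eq]
    exact ⟨hppB, hpptT⟩
  obtain ⟨pm, hpmf, hpmt⟩ := hsurj ((lo + hi) / 2) (-T - 1)
  have hpmB : pm ∈ B := (hmem pm).mpr ⟨by rw [hpmf]; linarith, by rw [hpmf]; linarith⟩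
  have hpmtT : tm pm < -T := by rw [hpmt]; linarith
  have hpmRm : pm ∈ Rm := by
    simp only [hRmdef, Set.mem_setOf_eq]
    exact ⟨hpmB, hpmtT⟩
  have hmid : Bornology.IsBounded {p : Pt | p ∈ B ∧ -T ≤ tm p ∧ tm p ≤ T} := by
    rw [isBounded_iff_forall_norm_le]
    refine ⟨(|f.a| + |f.b|) * (K1 + T) / D, ?_⟩
    intro p hp
    simp only [Set.mem_setOf_eq] at hp
    obtain ⟨hpB, hpt1, hpt2⟩ := hp
    have hx := hK1 p hpB
    have hub : |tm p| ≤ T := abs_le.mpr ⟨hpt1, hpt2⟩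
    have hid1 : D * p.1 = f.a * (f.eval p - f.c) - f.b * tm p := by
      simp only [AffForm.eval, htm, hDdef]; ring
    have hid2 : D * p.2 = f.b * (f.eval p - f.c) + f.a * tm p := by
      simp only [AffForm.eval, htm, hDdef]; ring
    have hxa := abs_nonneg (f.eval p - f.c)
    have hua := abs_nonneg (tm p)
    have hfa := abs_nonneg f.a
    have hfb := abs_nonneg f.b
    have key1 : |D * p.1| ≤ (|f.a| + |f.b|) * (K1 + T) := by
      rw [hid1, sub_eq_add_neg]
      have htri := abs_add_le (f.a * (f.eval p - f.c)) (-(f.b * tm p))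
      rw [abs_neg] at htri
      rw [abs_mul, abs_mul] at htri
      have t1 := mul_le_mul_of_nonneg_left hx hfa
      have t2 := mul_le_mul_of_nonneg_left hub hfb
      nlinarith [mul_nonneg hfa hT0, mul_nonneg hfb hK1n]
    have key2 : |D * p.2| ≤ (|f.a| + |f.b|) * (K1 + T) := by
      rw [hid2]
      have htri := abs_add_le (f.b * (f.eval p - f.c)) (f.a * tm p)
      rw [abs_mul, abs_mul] at htri
      have t1 := mul_le_mul_of_nonneg_left hx hfb
      have t2 := mul_le_mul_of_nonneg_left hub hfa
      nlinarith [mul_nonneg hfb hT0, mul_nonneg hfa hK1n]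
    rw [abs_mul, abs_of_pos hD] at key1 key2
    rw [Prod.norm_def, Real.norm_eq_abs, Real.norm_eq_abs]
    apply max_le <;> rw [le_div_iff₀ hD] <;> nlinarith
  have hmeet : ∀ U : Set Pt,
      (∃ p ∈ complement α, U = connectedComponentIn (complement α) p) →
      U ⊆ B → ¬ Bornology.IsBounded U → Rp ⊆ U ∨ Rm ⊆ U := by
    intro U hU hUB hUnb
    obtain ⟨p₀, hp₀, hUeq⟩ := hU
    have hnsub : ¬ U ⊆ {p : Pt | p ∈ B ∧ -T ≤ tm p ∧ tm p ≤ T} := fun h => hUnb (hmid.subset h)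
    obtain ⟨p1, hp1U, hp1n⟩ := Set.not_subset.mp hnsub
    have hp1B : p1 ∈ B := hUB hp1U
    have hp1t : T < tm p1 ∨ tm p1 < -T := by
      by_contra hc
      push_neg at hc
      exact hp1n (by simp only [Set.mem_setOf_eq]; exact ⟨hp1B, hc.2, hc.1⟩)
    rcases hp1t with h | h
    · left
      have hp1Rp : p1 ∈ Rp := by simp only [hRpdef, Set.mem_setOf_eq]; exact ⟨hp1B, h⟩
      have hsub : Rp ⊆ connectedComponentIn (complement α) p1 :=
        hRpconv.isPreconnected.subset_connectedComponentIn hp1Rp hRpc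
      have heq : connectedComponentIn (complement α) p₀
          = connectedComponentIn (complement α) p1 :=
        connectedComponentIn_eq (by rw [← hUeq]; exact hp1U)
      rw [hUeq, heq]
      exact hsub
    · right
      have hp1Rm : p1 ∈ Rm := by simp only [hRmdef, Set.mem_setOf_eq]; exact ⟨hp1B, h⟩
      have hsub : Rm ⊆ connectedComponentIn (complement α) p1 :=
        hRmconv.isPreconnected.subset_connectedComponentIn hp1Rm hRmc
      have heq : connectedComponentIn (complement α) p₀
          = connectedComponentIn (complement α) p1 :=
        connectedComponentIn_eq (by rw [← hUeq]; exact hp1U)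
      rw [hUeq, heq]
      exact hsub
  have hdisj : ∀ p : Pt, p ∈ U1 → p ∈ U2 → False := by
    intro p h1 h2
    apply hU12
    have h1' : p ∈ connectedComponentIn (complement α) p₁ := by rw [← hU1eq]; exact h1
    have h2' : p ∈ connectedComponentIn (complement α) p₂ := by rw [← hU2eq]; exact h2
    rw [hU1eq, hU2eq, connectedComponentIn_eq h1', connectedComponentIn_eq h2']
  have hcase : (Rp ⊆ U1 ∧ Rm ⊆ U2) ∨ (Rm ⊆ U1 ∧ Rp ⊆ U2) := by
    rcases hmeet U1 ⟨p₁, hp₁, hU1eq⟩ hU1B hUb1 with h1 | h1 <;>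
      rcases hmeet U2 ⟨p₂, hp₂, hU2eq⟩ hU2B hUb2 with h2 | h2
    · exact absurd (hdisj pp (h1 hppRp) (h2 hppRp)) not_false
    · exact Or.inl ⟨h1, h2⟩
    · exact Or.inr ⟨h1, h2⟩
    · exact absurd (hdisj pm (h1 hpmRm) (h2 hpmRm)) not_false
  ext k
  simp only [SepSet, Finset.mem_filter, Finset.mem_univ, true_and]
  constructor
  · rintro (⟨h1, h2⟩ | ⟨h1, h2⟩) <;> intro hpark <;>
    · have hkB : ∀ p ∈ B, (α k).eval p ≠ 0 := by
        intro p hp h0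
        have hline := hnol k hpark
        have hmem2 : p ∈ (α k).line ∩ B := ⟨h0, hp⟩
        rw [hline] at hmem2
        simpa using hmem2
      have hsc := signConst hBconv.isPreconnected (α k) hkB
      rcases hsc with hall | hall <;>
        linarith [hall p₂ (hU2B hU2ne), h2 p₂ hU2ne, hall p₁ (hU1B hU1ne), h1 p₁ hU1ne]
  · intro hnp
    have hk : w k ≠ 0 := fun h0 => hnp ((hwpar k).mpr h0)
    have hsc1 := signConst hU1pre (α k) (fun p hp => hU1c hp k)
    have hsc2 := signConst hU2pre (α k) (fun p hp => hU2c hp k)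
    have hchoosePos : ∀ U : Set Pt,
        ((∀ p ∈ U, 0 < (α k).eval p) ∨ (∀ p ∈ U, (α k).eval p < 0)) →
        ∀ p0 ∈ U, 0 < (α k).eval p0 → ∀ p ∈ U, 0 < (α k).eval p := by
      intro U hsc p0 hp0 hpos
      rcases hsc with h | h
      · exact h
      · intro p hp; linarith [h p0 hp0]
    have hchooseNeg : ∀ U : Set Pt,
        ((∀ p ∈ U, 0 < (α k).eval p) ∨ (∀ p ∈ U, (α k).eval p < 0)) →
        ∀ p0 ∈ U, (α k).eval p0 < 0 → ∀ p ∈ U, (α k).eval p < 0 := by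
      intro U hsc p0 hp0 hpos
      rcases hsc with h | h
      · intro p hp; linarith [h p0 hp0]
      · exact h
    have hepp := hsignp k hk pp hppB hpptT
    have hepm := hsignm k hk pm hpmB hpmtT
    rcases hcase with ⟨hR1, hR2⟩ | ⟨hR1, hR2⟩
    · rcases lt_or_gt_of_ne hk with hw | hw
      · exact Or.inr ⟨hchooseNeg U1 hsc1 pp (hR1 hppRp) (hepp.2 hw),
          hchoosePos U2 hsc2 pm (hR2 hpmRm) (hepm.2 hw)⟩
      · exact Or.inl ⟨hchoosePos U1 hsc1 pp (hR1 hppRp) (hepp.1 hw),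
          hchooseNeg U2 hsc2 pm (hR2 hpmRm) (hepm.1 hw)⟩
    · rcases lt_or_gt_of_ne hk with hw | hw
      · exact Or.inl ⟨hchoosePos U1 hsc1 pm (hR1 hpmRm) (hepm.2 hw),
          hchooseNeg U2 hsc2 pp (hR2 hppRp) (hepp.2 hw)⟩
      · exact Or.inr ⟨hchooseNeg U1 hsc1 pm (hR1 hpmRm) (hepm.1 hw),
          hchoosePos U2 hsc2 pp (hR2 hppRp) (hepp.1 hw)⟩

end Helpers

/-- A band `B` of `A` is resonant iff `q_∞ · ∏_{H k ∈ P} q k = 1`, where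
`P ⊆ A` is the set of lines of `A` parallel to the boundary lines of `B` (including the
boundary lines themselves); equivalently, iff `∏_{H k ∈ Sep(U_1(B), U_2(B))} q k = 1`.
In particular, whether a band is resonant depends only on the common direction of its
boundary lines. -/
theorem statement1 {n : ℕ} (α : Fin n → AffForm) (hA : IsArrangement α)
    (q r : Fin n → ℂ) (hq : ∀ i, q i ≠ 0) (hr0 : ∀ i, r i ≠ 0) (hrq : ∀ i, r i ^ 2 = q i)
    (i j : Fin n) (B U1 U2 : Set Pt) (hB : BandData α i j B U1 U2) :
    (Delta α r U1 U2 = 0 ↔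
      (∏ k, q k)⁻¹ * ∏ k ∈ Finset.univ.filter (fun k : Fin n => (α k).Parallel (α i)), q k
        = 1) ∧
    (Delta α r U1 U2 = 0 ↔ ∏ k ∈ SepSet α U1 U2, q k = 1) ∧
    (∀ (i' j' : Fin n) (B' U1' U2' : Set Pt), BandData α i' j' B' U1' U2' →
      (α i').Parallel (α i) →
      (Delta α r U1 U2 = 0 ↔ Delta α r U1' U2' = 0)) := by
  have hsep := sepSetEq α hA i j B U1 U2 hB
  have key : Delta α r U1 U2 = 0 ↔ ∏ k ∈ SepSet α U1 U2, q k = 1 := by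
    unfold Delta
    set P : ℂ := ∏ k ∈ SepSet α U1 U2, r k with hP
    have hPne : P ≠ 0 := Finset.prod_ne_zero_iff.mpr fun k _ => hr0 k
    have hPsq : P ^ 2 = ∏ k ∈ SepSet α U1 U2, q k := by
      rw [hP, ← Finset.prod_pow]
      exact Finset.prod_congr rfl fun k _ => hrq k
    rw [Finset.prod_inv_distrib, sub_eq_zero, ← hPsq]
    constructor
    · intro h
      rw [sq]
      nth_rewrite 2 [h]
      exact mul_inv_cancel₀ hPne
    · intro h
      field_simp
      have h' : P * P = 1 := by rw [← sq]; exact h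
      rw [← hP, one_div]
      exact eq_inv_of_mul_eq_one_left h'
  have hA0 : (∏ k ∈ Finset.univ.filter (fun k : Fin n => (α k).Parallel (α i)), q k) ≠ 0 :=
    Finset.prod_ne_zero_iff.mpr fun k _ => hq k
  have hB0 : (∏ k ∈ Finset.univ.filter (fun k : Fin n => ¬ (α k).Parallel (α i)), q k) ≠ 0 :=
    Finset.prod_ne_zero_iff.mpr fun k _ => hq k
  have hsplit : (∏ k ∈ Finset.univ.filter (fun k : Fin n => (α k).Parallel (α i)), q k) *
      (∏ k ∈ Finset.univ.filter (fun k : Fin n => ¬ (α k).Parallel (α i)), q k) = ∏ k, q k :=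
    Finset.prod_filter_mul_prod_filter_not _ _ _
  have h1 : (∏ k, q k)⁻¹ *
      (∏ k ∈ Finset.univ.filter (fun k : Fin n => (α k).Parallel (α i)), q k)
      = (∏ k ∈ Finset.univ.filter (fun k : Fin n => ¬ (α k).Parallel (α i)), q k)⁻¹ := by
    rw [← hsplit]
    field_simp
  refine ⟨?_, key, ?_⟩
  · rw [key, hsep, h1, inv_eq_one]
  · intro i' j' B' U1' U2' hB' hpar'
    have hsep' := sepSetEq α hA i' j' B' U1' U2' hB'
    have hfilt : (Finset.univ.filter fun k : Fin n => ¬ (α k).Parallel (α i')) =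
        Finset.univ.filter fun k : Fin n => ¬ (α k).Parallel (α i) := by
      apply Finset.filter_congr
      intro k _
      constructor
      · intro h hc
        exact h (parallelTrans hc (parallelSymm hpar'))
      · intro h hc
        exact h (parallelTrans hc hpar')
    unfold Delta
    rw [hsep, hsep', hfilt]

end
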